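/- (Derivative of the first projected coordinate.) Let ℓ ≥ 1, let (c,d) ∈ ℝ² with c ≠ 0, take speed ϱ = c, and let (t,s) ∈ ℝ². Along the disto-line t(τ) = t + cτ, s(τ) = s + (d/f_ℓ(c))(f_ℓ(t(τ)) − f_ℓ(t)), set ρ(τ) := ρ(t(τ),s(τ)) and t̃(τ) := t(τ)/ρ(τ). Then at every τ₀ with ρ(τ₀) > 0, t̃ is differentiable at τ₀ and t̃′(τ₀) = |c|^{1−ℓ} · (s(τ₀)/ρ(τ₀)^{2ℓ+1}) · Δ_ℓ((c,d);(t,s)). -/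

import Mathlib

open MeasureTheory Real Set

noncomputable section

/-- `f_ℓ(σ) = σ|σ|^{ℓ-1}`. -/
def fl (l : ℝ) (σ : ℝ) : ℝ := σ * |σ| ^ (l - 1)

/-- The disto-scalar product `⟨v|w⟩_ℓ`. -/
def distoDot (l : ℝ) (v w : ℝ × ℝ) : ℝ := fl l v.1 * fl l w.1 + v.2 * w.2

/-- The distorted determinant `Δ_ℓ(v;w)`. -/
def distoDet (l : ℝ) (v w : ℝ × ℝ) : ℝ := fl l v.1 * w.2 - v.2 * fl l w.1

/-- The quasihomogeneous gauge `ρ(t,s)`. -/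
def qgauge (l : ℝ) (p : ℝ × ℝ) : ℝ := (|p.1| ^ (2 * l) + p.2 ^ 2) ^ (1 / (2 * l))

/-- First coordinate of the disto-line through `(t,s)` parallel to `(c,d)` with speed `ϱ`. -/
def lineT (ϱ t : ℝ) (τ : ℝ) : ℝ := t + ϱ * τ

/-- Second coordinate of the disto-line through `(t,s)` parallel to `(c,d)` with speed `ϱ`. -/
def lineS (l c d ϱ t s : ℝ) (τ : ℝ) : ℝ := s + d / fl l c * (fl l (t + ϱ * τ) - fl l t)


lemma hasDerivAt_fl (l : ℝ) (hl : 1 ≤ l) (x : ℝ) :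
    HasDerivAt (fl l) (l * |x| ^ (l - 1)) x := by
  rcases ne_or_eq x 0 with hx | rfl
  · have hax : (0:ℝ) < |x| := abs_pos.mpr hx
    have h1 := (hasDerivAt_abs hx).rpow_const (p := l - 1) (Or.inl (abs_ne_zero.mpr hx))
    have h2 := (hasDerivAt_id x).mul h1
    refine h2.congr_deriv ?_
    symm
    have hs : x * (SignType.sign x : ℝ) = |x| := by
      rcases lt_or_gt_of_ne hx with h | h
      · simp [h, abs_of_neg h]
      · simp [h, abs_of_pos h]
    have hsplit : |x| * |x| ^ (l - 1 - 1) = |x| ^ (l - 1) := by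
      nth_rewrite 1 [← Real.rpow_one |x|]
      rw [← Real.rpow_add hax]
      ring_nf
    rw [← hsplit]
    simp only [id]
    linear_combination (-((l - 1) * |x| ^ (l - 1 - 1))) * hs
  · rcases eq_or_lt_of_le hl with hl1 | hl1
    · have hfl : fl l = fun σ => σ := funext fun σ => by simp [fl, ← hl1]
      rw [hfl]
      simpa [← hl1] using hasDerivAt_id' (0:ℝ)
    · have h0 : l * |(0:ℝ)| ^ (l - 1) = 0 := by
        simp [Real.zero_rpow (ne_of_gt (sub_pos.mpr hl1))]
      rw [hasDerivAt_iff_tendsto_slope, h0]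
      have h00 : fl l 0 = 0 := by simp [fl]
      have heq : ∀ τ ∈ ({(0:ℝ)}ᶜ : Set ℝ), |τ| ^ (l - 1) = slope (fl l) 0 τ := by
        intro τ hτ
        have hτ0 : τ ≠ 0 := by simpa using hτ
        simp only [slope, fl, vsub_eq_sub, sub_zero, smul_eq_mul, h00, zero_mul, abs_zero]
        rw [inv_mul_cancel_left₀ hτ0]
      have hcont : Filter.Tendsto (fun τ : ℝ => |τ| ^ (l - 1)) (nhdsWithin 0 {0}ᶜ) (nhds 0) := by
        have h2 : Filter.Tendsto (fun y : ℝ => y ^ (l - 1)) (nhds |(0:ℝ)|)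
            (nhds (|(0:ℝ)| ^ (l - 1))) :=
          (Real.continuousAt_rpow_const |(0:ℝ)| (l-1) (Or.inr (by linarith))).tendsto
        have h3 := h2.comp (continuous_abs.tendsto (0:ℝ))
        rw [abs_zero, Real.zero_rpow (ne_of_gt (sub_pos.mpr hl1))] at h3
        exact h3.mono_left nhdsWithin_le_nhds
      exact hcont.congr' (by filter_upwards [self_mem_nhdsWithin] using heq)

/-- derivative of the first projected coordinate. -/
theorem hasDerivAt_projected_t (l : ℝ) (hl : 1 ≤ l) (c d : ℝ) (hc : c ≠ 0) (t s : ℝ)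
    (τ₀ : ℝ) (hρ : 0 < qgauge l (lineT c t τ₀, lineS l c d c t s τ₀)) :
    HasDerivAt (fun τ => lineT c t τ / qgauge l (lineT c t τ, lineS l c d c t s τ))
      (|c| ^ (1 - l) *
        (lineS l c d c t s τ₀ / qgauge l (lineT c t τ₀, lineS l c d c t s τ₀) ^ (2 * l + 1)) *
        distoDet l (c, d) (t, s)) τ₀ := by
  have hl0 : l ≠ 0 := by linarith
  have h2l : (1:ℝ) < 2 * l := by linarith
  set T₀ := lineT c t τ₀ with hT₀
  set S₀ := lineS l c d c t s τ₀ with hS₀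
  have hT : HasDerivAt (lineT c t) c τ₀ := by
    have := ((hasDerivAt_id τ₀).const_mul c).const_add t
    exact this.congr_deriv (mul_one c)
  have hflc : fl l c ≠ 0 := by
    have : (0:ℝ) < |c| ^ (l - 1) := Real.rpow_pos_of_pos (abs_pos.mpr hc) _
    exact mul_ne_zero hc (ne_of_gt this)
  have hS : HasDerivAt (lineS l c d c t s)
      (d / fl l c * (l * |T₀| ^ (l - 1) * c)) τ₀ := by
    have h1 := ((hasDerivAt_fl l hl T₀).comp τ₀ hT)
    have h2 := ((h1.sub_const (fl l t)).const_mul (d / fl l c)).const_add s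
    exact h2
  have hA : HasDerivAt (fun τ => |lineT c t τ| ^ (2 * l))
      ((2 * l * |T₀| ^ (2 * l - 2) * T₀) * c) τ₀ :=
    HasDerivAt.comp (h₂ := fun x : ℝ ↦ |x| ^ (2 * l)) τ₀ (hasDerivAt_abs_rpow T₀ h2l) hT
  have hS2 : HasDerivAt (fun τ => lineS l c d c t s τ ^ 2)
      ((2:ℕ) * S₀ ^ 1 * (d / fl l c * (l * |T₀| ^ (l - 1) * c))) τ₀ := by
    refine (hS.pow 2).congr_deriv ?_
    push_cast; ring
  have hG := hA.add hS2
  set G₀ := |T₀| ^ (2 * l) + S₀ ^ 2 with hG₀def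
  have hG0 : 0 < G₀ := by
    have hG0' : 0 ≤ G₀ := by positivity
    rcases hG0'.lt_or_eq with h | h
    · exact h
    · exfalso
      have : qgauge l (T₀, S₀) = 0 := by
        rw [qgauge, ← hG₀def, ← h, Real.zero_rpow (by positivity)]
      rw [this] at hρ; exact lt_irrefl 0 hρ
  have hq : HasDerivAt (fun τ => qgauge l (lineT c t τ, lineS l c d c t s τ))
      (((2 * l * |T₀| ^ (2 * l - 2) * T₀) * c +
        (2:ℕ) * S₀ ^ 1 * (d / fl l c * (l * |T₀| ^ (l - 1) * c))) * (1 / (2 * l)) *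
        G₀ ^ (1 / (2 * l) - 1)) τ₀ :=
    hG.rpow_const (Or.inl hG0.ne')
  have hdiv := hT.div hq (ne_of_gt hρ)
  refine hdiv.congr_deriv ?_
  symm
  rw [← hT₀, ← hS₀]
  have hρpos : 0 < qgauge l (T₀, S₀) := hρ
  set ρ := qgauge l (T₀, S₀) with hρd
  have hρdef : ρ = G₀ ^ (1 / (2 * l)) := rfl
  have idpow : ρ ^ (2 * l) = G₀ := by
    rw [hρdef, ← Real.rpow_mul hG0.le, show 1 / (2 * l) * (2 * l) = 1 from by field_simp,
      Real.rpow_one]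
  have id4 : ρ ^ (2 * l + 1) = G₀ * ρ := by
    rw [Real.rpow_add hρpos, Real.rpow_one, idpow]
  have id3 : G₀ ^ (1 / (2 * l) - 1) = ρ / G₀ := by
    rw [Real.rpow_sub hG0, Real.rpow_one, hρdef]
  have id1 : |T₀| ^ (2 * l - 2) * T₀ ^ 2 = |T₀| ^ (2 * l) := by
    have h2 : |T₀| ^ ((2:ℝ)) = T₀ ^ 2 := by
      rw [show ((2:ℝ)) = ((2:ℕ):ℝ) from by norm_num, Real.rpow_natCast, sq_abs]
    rw [← h2, ← Real.rpow_add' (abs_nonneg _) (by intro h; apply hl0; linarith),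
      show 2 * l - 2 + (2:ℝ) = 2 * l from by ring]
  have id2 : T₀ * |T₀| ^ (l - 1) = fl l T₀ := rfl
  have id5 : c = |c| ^ (1 - l) * fl l c := by
    rw [fl]
    have h1 : |c| ^ (1 - l) * |c| ^ (l - 1) = 1 := by
      rw [← Real.rpow_add (abs_pos.mpr hc)]; norm_num
    linear_combination (-c) * h1
  have idS : S₀ * fl l c = s * fl l c + d * (fl l T₀ - fl l t) := by
    have hSS : S₀ = s + d / fl l c * (fl l T₀ - fl l t) := rfl
    rw [hSS]; field_simp
  have idΔ : fl l c * s - d * fl l t = S₀ * fl l c - d * fl l T₀ := by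
    linear_combination (-1 : ℝ) * idS
  have hGne : G₀ ≠ 0 := hG0.ne'
  simp only [distoDet]
  rw [id4, id3, idΔ]
  set k := |c| ^ (1 - l) with hk
  set fc := fl l c with hfc
  set fT := fl l T₀ with hfT
  set a1 := |T₀| ^ (2 * l - 2) with ha1
  set a2 := |T₀| ^ (l - 1) with ha2
  set A := |T₀| ^ (2 * l) with hA'
  rw [id5, hG₀def, ← id1, ← id2]
  rw [hG₀def, ← id1] at hGne
  have hρne : ρ ≠ 0 := ne_of_gt hρpos
  field_simp
  ring

end
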